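/- The quantity C(θ, θ') = −(R_o/2)·(i₀ − R_o R_t cos θ)²·(θ')² + R_o R_t·(i₀ − (R_o R_t/2)·cos θ)·(cos θ − a₀ sin θ) + a₀·θ·(I₀ i₀ + R_o² R_t²/2) − a₀ R_o R_t I₀ sin θ is a first integral of the ODE θ'' = (a₀ I₀ − a₀ R_o R_t cos θ − R_o R_t (R_o sin θ·(θ')² + sin θ))/(R_o·(i₀ − R_o R_t cos θ)); that is, along any solution θ(t) of this ODE, the derivative d/dt C(θ(t), θ'(t)) = 0. -/

import Mathlib

open Real

/-- The generalized-energy first integral of the reduced system. -/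
noncomputable def Cint (a0 Ro Rt i0 I0 θ p : ℝ) : ℝ :=
  -(Ro / 2) * (i0 - Ro * Rt * Real.cos θ) ^ 2 * p ^ 2
    + Ro * Rt * (i0 - Ro * Rt / 2 * Real.cos θ) * (Real.cos θ - a0 * Real.sin θ)
    + a0 * θ * (I0 * i0 + Ro ^ 2 * Rt ^ 2 / 2)
    - a0 * Ro * Rt * I0 * Real.sin θ

theorem Cint_first_integral (a0 Ro Rt i0 I0 : ℝ)
    (ha0 : 0 < a0) (hRo : 0 < Ro) (hRt : 0 < Rt) (hi0 : 0 < i0) (hI0 : 0 < I0)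
    (hden : Ro * Rt < i0) (θ : ℝ → ℝ) (hθ : ContDiff ℝ 2 θ)
    (hODE : ∀ t, deriv (deriv θ) t =
      (a0 * I0 - a0 * Ro * Rt * Real.cos (θ t)
        - Ro * Rt * (Ro * Real.sin (θ t) * (deriv θ t) ^ 2 + Real.sin (θ t)))
      / (Ro * (i0 - Ro * Rt * Real.cos (θ t)))) :
    ∀ t, deriv (fun s => Cint a0 Ro Rt i0 I0 (θ s) (deriv θ s)) t = 0 := by
  have hθ1 : Differentiable ℝ θ := hθ.differentiable (by norm_num)
  have h2 : ContDiff ℝ (1 + 1) θ := by norm_num at hθ ⊢; exact hθ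
  have hθ' : ContDiff ℝ 1 (deriv θ) := (contDiff_succ_iff_deriv.mp h2).2.2
  have hθ'1 : Differentiable ℝ (deriv θ) := hθ'.differentiable (by norm_num)
  intro t
  set c : ℝ := Real.cos (θ t) with hc
  set s : ℝ := Real.sin (θ t) with hs
  set p : ℝ := deriv θ t with hp
  set q : ℝ := deriv (deriv θ) t with hq
  have hθd : HasDerivAt θ p t := (hθ1 t).hasDerivAt
  have hpd : HasDerivAt (deriv θ) q t := (hθ'1 t).hasDerivAt
  have hcos : HasDerivAt (fun x => Real.cos (θ x)) (-s * p) t :=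
    (Real.hasDerivAt_cos (θ t)).comp t hθd
  have hsin : HasDerivAt (fun x => Real.sin (θ x)) (c * p) t :=
    (Real.hasDerivAt_sin (θ t)).comp t hθd
  -- derivative of (i0 - Ro*Rt*cos(θ x))
  have hA : HasDerivAt (fun x => i0 - Ro * Rt * Real.cos (θ x))
      (-(Ro * Rt * (-s * p))) t := by
    simpa [Pi.sub_def] using (hasDerivAt_const t i0).sub ((hcos.const_mul (Ro * Rt)))
  have hA2 : HasDerivAt (fun x => (i0 - Ro * Rt * Real.cos (θ x)) ^ 2)
      (2 * (i0 - Ro * Rt * c) ^ 1 * (-(Ro * Rt * (-s * p)))) t := by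
    simpa [Pi.pow_def] using hA.pow 2
  have hp2 : HasDerivAt (fun x => (deriv θ x) ^ 2) (2 * p ^ 1 * q) t := by
    simpa [Pi.pow_def] using hpd.pow 2
  have h1 : HasDerivAt (fun x => -(Ro / 2) * (i0 - Ro * Rt * Real.cos (θ x)) ^ 2
        * (deriv θ x) ^ 2)
      (-(Ro / 2) * ((2 * (i0 - Ro * Rt * c) ^ 1 * (-(Ro * Rt * (-s * p)))) * p ^ 2
        + (i0 - Ro * Rt * c) ^ 2 * (2 * p ^ 1 * q))) t := by
    have := ((hA2.mul hp2).const_mul (-(Ro / 2)))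
    simpa [mul_assoc, mul_add] using this
  have hB : HasDerivAt (fun x => i0 - Ro * Rt / 2 * Real.cos (θ x))
      (-(Ro * Rt / 2 * (-s * p))) t := by
    simpa [Pi.sub_def] using (hasDerivAt_const t i0).sub ((hcos.const_mul (Ro * Rt / 2)))
  have hC : HasDerivAt (fun x => Real.cos (θ x) - a0 * Real.sin (θ x))
      (-s * p - a0 * (c * p)) t := hcos.sub (hsin.const_mul a0)
  have h2' : HasDerivAt (fun x => Ro * Rt * ((i0 - Ro * Rt / 2 * Real.cos (θ x))
        * (Real.cos (θ x) - a0 * Real.sin (θ x))))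
      (Ro * Rt * ((-(Ro * Rt / 2 * (-s * p))) * (c - a0 * s)
        + (i0 - Ro * Rt / 2 * c) * (-s * p - a0 * (c * p)))) t :=
    (hB.mul hC).const_mul (Ro * Rt)
  have h3 : HasDerivAt (fun x => a0 * θ x * (I0 * i0 + Ro ^ 2 * Rt ^ 2 / 2))
      (a0 * p * (I0 * i0 + Ro ^ 2 * Rt ^ 2 / 2)) t := by
    have := (hθd.const_mul a0).mul_const (I0 * i0 + Ro ^ 2 * Rt ^ 2 / 2)
    simpa using this
  have h4 : HasDerivAt (fun x => a0 * Ro * Rt * I0 * Real.sin (θ x))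
      (a0 * Ro * Rt * I0 * (c * p)) t := hsin.const_mul (a0 * Ro * Rt * I0)
  have hD : HasDerivAt (fun x => Cint a0 Ro Rt i0 I0 (θ x) (deriv θ x))
      (-(Ro / 2) * ((2 * (i0 - Ro * Rt * c) ^ 1 * (-(Ro * Rt * (-s * p)))) * p ^ 2
          + (i0 - Ro * Rt * c) ^ 2 * (2 * p ^ 1 * q))
        + Ro * Rt * ((-(Ro * Rt / 2 * (-s * p))) * (c - a0 * s)
          + (i0 - Ro * Rt / 2 * c) * (-s * p - a0 * (c * p)))
        + a0 * p * (I0 * i0 + Ro ^ 2 * Rt ^ 2 / 2)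
        - a0 * Ro * Rt * I0 * (c * p)) t := by
    have := ((h1.add h2').add h3).sub h4
    simpa only [Cint, mul_assoc, Pi.add_def, Pi.sub_def] using this
  rw [hD.deriv]
  have hqval : q = (a0 * I0 - a0 * Ro * Rt * c - Ro * Rt * (Ro * s * p ^ 2 + s))
      / (Ro * (i0 - Ro * Rt * c)) := hODE t
  have hclte : c ≤ 1 := Real.cos_le_one _
  have hApos : 0 < i0 - Ro * Rt * c := by nlinarith [mul_pos hRo hRt]
  have hAne : i0 - Ro * Rt * c ≠ 0 := ne_of_gt hApos
  have hpyth : s ^ 2 + c ^ 2 = 1 := Real.sin_sq_add_cos_sq (θ t)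
  have key : (-(Ro / 2) * ((2 * (i0 - Ro * Rt * c) ^ 1 * (-(Ro * Rt * (-s * p)))) * p ^ 2
          + (i0 - Ro * Rt * c) ^ 2 * (2 * p ^ 1 * q))
        + Ro * Rt * ((-(Ro * Rt / 2 * (-s * p))) * (c - a0 * s)
          + (i0 - Ro * Rt / 2 * c) * (-s * p - a0 * (c * p)))
        + a0 * p * (I0 * i0 + Ro ^ 2 * Rt ^ 2 / 2)
        - a0 * Ro * Rt * I0 * (c * p))
      = -(a0 * Ro ^ 2 * Rt ^ 2 / 2) * p * (s ^ 2 + c ^ 2 - 1) := by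
    rw [hqval]
    field_simp
    ring
  rw [key, hpyth]
  ring
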